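/- Theorem (Weak convergence of the Deep Ritz Method to the unique minimizer): In the Setting, assume Assumptions (A1) and (A3), and assume that F^f possesses a unique global minimizer x^f ∈ X₀. Let (δ_n) be a sequence of non-negative reals converging to zero and let (x_n) be any sequence with F_n^f(x_n) ≤ inf_{z∈X} F_n^f(z) + δ_n for all n. Then x_n converges to x^f in the weak topology of X. -/

import Mathlib

open Filter Topology
open scoped Classical

/-- Weak convergence of a sequence in a normed space: convergence tested against
every continuous linear functional. -/
def WeakTendsto {X : Type*} [NormedAddCommGroup X] [NormedSpace ℝ X]
    (u : ℕ → X) (x : X) : Prop :=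
  ∀ φ : X →L[ℝ] ℝ, Tendsto (fun n => φ (u n)) atTop (𝓝 (φ x))

section DeepRitzAux

open NormedSpace

lemma exists_vanishing_functional {Z : Type*} [NormedAddCommGroup Z] [NormedSpace ℝ Z]
    (Y : Submodule ℝ Z) (hY : IsClosed (Y : Set Z)) {z : Z} (hz : z ∉ Y) :
    ∃ φ : Z →L[ℝ] ℝ, (∀ y ∈ Y, φ y = 0) ∧ φ z ≠ 0 := by
  obtain ⟨f, u, hfY, hfz⟩ := geometric_hahn_banach_closed_point Y.convex hY hz
  have hu : 0 < u := by
    have := hfY 0 Y.zero_mem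
    simpa using this
  refine ⟨f, fun y hy => ?_, ?_⟩
  · by_contra h
    have h1 : f ((u / f y) • y) < u := hfY _ (Y.smul_mem _ hy)
    rw [map_smul] at h1
    simp only [smul_eq_mul] at h1
    rw [div_mul_cancel₀ _ h] at h1
    exact lt_irrefl _ h1
  · exact ne_of_gt (lt_trans hu hfz)

lemma separable_of_dual_separable (Z : Type*) [NormedAddCommGroup Z] [NormedSpace ℝ Z]
    [TopologicalSpace.SeparableSpace (StrongDual ℝ Z)] :
    TopologicalSpace.SeparableSpace Z := by
  obtain ⟨g, hg⟩ := TopologicalSpace.exists_dense_seq (StrongDual ℝ Z)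
  -- choose norming vectors
  have hsel : ∀ k : ℕ, ∃ xk : Z, ‖xk‖ ≤ 1 ∧ ‖g k‖ / 2 ≤ ‖(g k) xk‖ := by
    intro k
    rcases eq_or_lt_of_le (norm_nonneg (g k)) with h0 | h0
    · exact ⟨0, by simp, by simp [← h0]⟩
    · obtain ⟨xk, hx1, hx2⟩ := (g k).exists_lt_apply_of_lt_opNorm (r := ‖g k‖ / 2)
        (by linarith)
      exact ⟨xk, le_of_lt hx1, le_of_lt hx2⟩
  choose xs hxs1 hxs2 using hsel
  -- the closed span of the norming vectors is everything
  set Y : Submodule ℝ Z := (Submodule.span ℝ (Set.range xs)).topologicalClosure with hYdef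
  have hYsep : TopologicalSpace.IsSeparable (Y : Set Z) := by
    have : TopologicalSpace.IsSeparable (Set.range xs) :=
      (Set.countable_range xs).isSeparable
    simpa [hYdef, Submodule.topologicalClosure_coe] using this.span.closure
  have hYtop : Y = ⊤ := by
    by_contra h
    obtain ⟨z, hz⟩ : ∃ z : Z, z ∉ Y := by
      by_contra h2
      push_neg at h2
      exact h (Submodule.eq_top_iff'.2 h2)
    obtain ⟨φ, hφY, hφz⟩ := exists_vanishing_functional Y
      (Submodule.isClosed_topologicalClosure _) hz
    have hφn : ‖φ‖ ≠ 0 := by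
      intro h0
      have h1 : ‖φ z‖ ≤ 0 := by
        calc ‖φ z‖ ≤ ‖φ‖ * ‖z‖ := φ.le_opNorm z
        _ = 0 := by rw [h0]; ring
      have h2 : ‖φ z‖ = 0 := le_antisymm h1 (norm_nonneg _)
      exact hφz (norm_eq_zero.mp h2)
    set φ' : StrongDual ℝ Z := ‖φ‖⁻¹ • φ with hφ'def
    have hφ'Y : ∀ y ∈ Y, φ' y = 0 := by
      intro y hy; simp [hφ'def, hφY y hy]
    have hφ'n : ‖φ'‖ = 1 := by
      rw [hφ'def, norm_smul, norm_inv, norm_norm, inv_mul_cancel₀ hφn]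
    obtain ⟨k, hk⟩ := hg.exists_dist_lt φ' (by norm_num : (0:ℝ) < 1/4)
    rw [dist_comm, dist_eq_norm] at hk
    have hgk : (3:ℝ)/4 ≤ ‖g k‖ := by
      have h1 : ‖φ'‖ - ‖g k‖ ≤ ‖φ' - g k‖ := norm_sub_norm_le _ _
      rw [norm_sub_rev] at h1
      rw [hφ'n] at h1
      linarith
    have hxY : xs k ∈ Y := by
      apply Submodule.le_topologicalClosure
      exact Submodule.subset_span ⟨k, rfl⟩
    have : ‖(g k) (xs k)‖ ≤ 1/4 := by
      have h1 : (g k) (xs k) = (g k - φ') (xs k) := by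
        simp [hφ'Y _ hxY]
      rw [h1]
      calc ‖(g k - φ') (xs k)‖ ≤ ‖g k - φ'‖ * ‖xs k‖ := (g k - φ').le_opNorm _
      _ ≤ 1/4 * 1 := by
          apply mul_le_mul (le_of_lt hk) (hxs1 k) (norm_nonneg _) (by norm_num)
      _ = 1/4 := by ring
    have := hxs2 k
    linarith
  -- conclude separability
  have : TopologicalSpace.IsSeparable (Set.univ : Set Z) := by
    have := hYsep
    rw [hYtop] at this
    simpa using this
  exact TopologicalSpace.isSeparable_univ_iff.mp this

noncomputable def restrictDual {Z : Type*} [NormedAddCommGroup Z] [NormedSpace ℝ Z]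
    (Y : Submodule ℝ Z) : StrongDual ℝ Z →L[ℝ] StrongDual ℝ ↥Y :=
  (ContinuousLinearMap.compL ℝ ↥Y Z ℝ).flip Y.subtypeL

@[simp] lemma restrictDual_apply {Z : Type*} [NormedAddCommGroup Z] [NormedSpace ℝ Z]
    (Y : Submodule ℝ Z) (φ : StrongDual ℝ Z) (y : ↥Y) : restrictDual Y φ y = φ y := rfl

lemma subspace_reflexive {Z : Type*} [NormedAddCommGroup Z] [NormedSpace ℝ Z]
    (hrefl : Function.Surjective (inclusionInDoubleDual ℝ Z))
    (Y : Submodule ℝ Z) (hY : IsClosed (Y : Set Z)) :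
    Function.Surjective (inclusionInDoubleDual ℝ ↥Y) := by
  intro ψ
  obtain ⟨x, hx⟩ := hrefl (ψ.comp (restrictDual Y))
  have hxapp : ∀ φ : StrongDual ℝ Z, φ x = ψ (restrictDual Y φ) := by
    intro φ
    have := congrFun (congrArg DFunLike.coe hx) φ
    simpa [NormedSpace.dual_def] using this
  have hxY : x ∈ Y := by
    by_contra hxY
    obtain ⟨φ, hφY, hφx⟩ := exists_vanishing_functional Y hY hxY
    have h0 : restrictDual Y φ = 0 := by
      ext y
      exact hφY y y.2
    have := hxapp φ
    rw [h0] at this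
    simp at this
    exact hφx this
  refine ⟨⟨x, hxY⟩, ?_⟩
  ext g
  obtain ⟨φ, hφext, -⟩ := exists_extension_norm_eq Y g
  have h1 : restrictDual Y φ = g := by
    ext y
    simp [hφext y]
  have := hxapp φ
  rw [h1] at this
  rw [NormedSpace.dual_def]
  rw [← this]
  exact (hφext ⟨x, hxY⟩).symm

lemma exists_weak_subseq {Z : Type*} [NormedAddCommGroup Z] [NormedSpace ℝ Z]
    (hrefl : Function.Surjective (inclusionInDoubleDual ℝ Z))
    (u : ℕ → Z) (C : ℝ) (hC : ∀ n, ‖u n‖ ≤ C) :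
    ∃ (m : ℕ → ℕ) (z : Z), StrictMono m ∧ WeakTendsto (u ∘ m) z := by
  set C' : ℝ := max C 0 with hC'def
  have hC' : ∀ n, ‖u n‖ ≤ C' := fun n => le_trans (hC n) (le_max_left _ _)
  have hC'0 : 0 ≤ C' := le_max_right _ _
  set Y : Submodule ℝ Z := (Submodule.span ℝ (Set.range u)).topologicalClosure with hYdef
  have hYclosed : IsClosed (Y : Set Z) := Submodule.isClosed_topologicalClosure _
  have huY : ∀ n, u n ∈ Y :=
    fun n => Submodule.le_topologicalClosure _ (Submodule.subset_span ⟨n, rfl⟩)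
  -- Y is separable
  haveI hYsep : TopologicalSpace.SeparableSpace ↥Y := by
    have h1 : TopologicalSpace.IsSeparable (Y : Set Z) := by
      have : TopologicalSpace.IsSeparable (Set.range u) :=
        (Set.countable_range u).isSeparable
      simpa [hYdef, Submodule.topologicalClosure_coe] using this.span.closure
    exact h1.separableSpace
  -- Dual of Y is separable
  haveI : TopologicalSpace.SeparableSpace (StrongDual ℝ (StrongDual ℝ ↥Y)) := by
    have hsurj := subspace_reflexive hrefl Y hYclosed
    exact hsurj.denseRange.separableSpace (inclusionInDoubleDual ℝ ↥Y).continuous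
  haveI : TopologicalSpace.SeparableSpace (StrongDual ℝ ↥Y) :=
    separable_of_dual_separable (StrongDual ℝ ↥Y)
  obtain ⟨g, hg⟩ := TopologicalSpace.exists_dense_seq (StrongDual ℝ ↥Y)
  -- extend the functionals to Z
  have hext : ∀ k, ∃ ψ : StrongDual ℝ Z, ∀ y : ↥Y, ψ y = g k y := by
    intro k
    obtain ⟨ψ, hψ, -⟩ := exists_extension_norm_eq Y (g k)
    exact ⟨ψ, hψ⟩
  choose ψ hψ using hext
  -- diagonal extraction via compactness of the product of intervals
  set v : ℕ → (ℕ → ℝ) := fun n k => ψ k (u n) with hvdef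
  have hvS : ∀ n, v n ∈ Set.pi Set.univ (fun k => Set.Icc (-(‖ψ k‖ * C')) (‖ψ k‖ * C')) := by
    intro n k _
    have h1 : ‖ψ k (u n)‖ ≤ ‖ψ k‖ * C' :=
      le_trans ((ψ k).le_opNorm (u n)) (by
        exact mul_le_mul_of_nonneg_left (hC' n) (norm_nonneg _))
    rw [Real.norm_eq_abs, abs_le] at h1
    exact ⟨h1.1, h1.2⟩
  obtain ⟨a, -, m, hm, hma⟩ := (isCompact_univ_pi
    (fun k => isCompact_Icc)).tendsto_subseq hvS
  rw [tendsto_pi_nhds] at hma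
  -- the sequence converges against every functional
  have hcauchy : ∀ φ : StrongDual ℝ Z, ∃ l : ℝ, Tendsto (fun j => φ (u (m j))) atTop (𝓝 l) := by
    intro φ
    apply cauchySeq_tendsto_of_complete
    rw [Metric.cauchySeq_iff]
    intro ε hε
    have hd : (0:ℝ) < ε / (4 * (C' + 1)) := by positivity
    obtain ⟨k, hk⟩ := hg.exists_dist_lt (restrictDual Y φ) hd
    replace hk : ‖restrictDual Y φ - g k‖ < ε / (4 * (C' + 1)) :=
      lt_of_eq_of_lt (dist_eq_norm (restrictDual Y φ) (g k)).symm hk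
    have hclose : ∀ n, |φ (u n) - ψ k (u n)| < ε / 4 := by
      intro n
      have h1 : φ (u n) - ψ k (u n) = (restrictDual Y φ - g k) (⟨u n, huY n⟩ : ↥Y) := by
        simp [hψ k ⟨u n, huY n⟩]
      rw [h1, ← Real.norm_eq_abs]
      calc ‖(restrictDual Y φ - g k) (⟨u n, huY n⟩ : ↥Y)‖
          ≤ ‖restrictDual Y φ - g k‖ * ‖(⟨u n, huY n⟩ : ↥Y)‖ :=
            (restrictDual Y φ - g k).le_opNorm _
        _ ≤ (ε / (4 * (C' + 1))) * C' := by
            apply mul_le_mul (le_of_lt hk) _ (norm_nonneg _) (le_of_lt hd)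
            simpa using hC' n
        _ < ε / 4 := by
            rw [div_mul_eq_mul_div, div_lt_div_iff₀ (by positivity) (by norm_num)]
            nlinarith
    have hkc : CauchySeq (fun j => ψ k (u (m j))) := (hma k).cauchySeq
    rw [Metric.cauchySeq_iff] at hkc
    obtain ⟨N, hN⟩ := hkc (ε/2) (by positivity)
    refine ⟨N, fun i hi j hj => ?_⟩
    have h2 := hN i hi j hj
    rw [Real.dist_eq] at h2 ⊢
    have e1 := hclose (m i)
    have e2 := hclose (m j)
    have : φ (u (m i)) - φ (u (m j)) =
        (φ (u (m i)) - ψ k (u (m i))) + (ψ k (u (m i)) - ψ k (u (m j)))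
        + (ψ k (u (m j)) - φ (u (m j))) := by ring
    rw [this]
    calc |_ + _ + _| ≤ |(φ (u (m i)) - ψ k (u (m i))) + (ψ k (u (m i)) - ψ k (u (m j)))|
          + |ψ k (u (m j)) - φ (u (m j))| := abs_add_le _ _
      _ ≤ |φ (u (m i)) - ψ k (u (m i))| + |ψ k (u (m i)) - ψ k (u (m j))|
          + |ψ k (u (m j)) - φ (u (m j))| := by
            have := abs_add_le (φ (u (m i)) - ψ k (u (m i))) (ψ k (u (m i)) - ψ k (u (m j)))
            linarith
      _ < ε/4 + ε/2 + ε/4 := by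
            have e2' : |ψ k (u (m j)) - φ (u (m j))| < ε/4 := by
              rw [abs_sub_comm]; exact e2
            linarith
      _ = ε := by ring
  choose l hl using hcauchy
  -- build the limit as an element of the double dual
  have hlbound : ∀ φ : StrongDual ℝ Z, ‖l φ‖ ≤ C' * ‖φ‖ := by
    intro φ
    rw [Real.norm_eq_abs]
    have h1 : Tendsto (fun j => |φ (u (m j))|) atTop (𝓝 |l φ|) := (hl φ).abs
    apply le_of_tendsto h1
    filter_upwards with j
    calc |φ (u (m j))| ≤ ‖φ‖ * ‖u (m j)‖ := φ.le_opNorm _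
      _ ≤ ‖φ‖ * C' := mul_le_mul_of_nonneg_left (hC' _) (norm_nonneg _)
      _ = C' * ‖φ‖ := mul_comm _ _
  set L : StrongDual ℝ Z →ₗ[ℝ] ℝ :=
    { toFun := l
      map_add' := fun φ φ' => tendsto_nhds_unique (hl (φ + φ'))
        (by simpa using ((hl φ).add (hl φ')))
      map_smul' := fun c φ => tendsto_nhds_unique (hl (c • φ))
        (by simpa using ((hl φ).const_mul c)) } with hLdef
  obtain ⟨z, hz⟩ := hrefl (L.mkContinuous C' hlbound)
  refine ⟨m, z, hm, fun φ => ?_⟩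
  have hφz : φ z = l φ := by
    have := congrFun (congrArg DFunLike.coe hz) φ
    simpa [NormedSpace.dual_def, hLdef, LinearMap.mkContinuous] using this
  rw [hφz]
  exact hl φ

end DeepRitzAux

open NormedSpace in
/-- **Weak convergence of the Deep Ritz Method to the unique minimizer.**
Under Assumptions (A1) and (A3), if the limit functional `F` possesses a unique
global minimizer `xf ∈ X₀`, then any sequence of `δ n`-quasi-minimizers of the
penalized functionals `(Fn n)` converges to `xf` in the weak topology of `X`. -/
theorem deep_ritz_weak_convergence
    {X B : Type*} [NormedAddCommGroup X] [NormedSpace ℝ X] [CompleteSpace X]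
    [NormedAddCommGroup B] [NormedSpace ℝ B] [CompleteSpace B]
    (hXrefl : Function.Surjective (NormedSpace.inclusionInDoubleDual ℝ X))
    (hBrefl : Function.Surjective (NormedSpace.inclusionInDoubleDual ℝ B))
    (γ : X →L[ℝ] B)
    (E : X → ℝ)
    -- E is bounded from below
    (hEbdd : ∃ m : ℝ, ∀ x : X, m ≤ E x)
    -- E is (sequentially) lower semicontinuous w.r.t. the weak topology of X
    (hElsc : ∀ (x : X) (u : ℕ → X), WeakTendsto u x →
      ((E x : EReal)) ≤ liminf (fun n => ((E (u n) : EReal))) atTop)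
    -- E is continuous w.r.t. the norm topology of X
    (hEcont : Continuous E)
    (p : ℝ) (hp : 1 < p)
    (f : X →L[ℝ] ℝ)
    (lam : ℕ → ℝ) (hlam_pos : ∀ n, 0 < lam n) (hlam : Tendsto lam atTop atTop)
    (A : ℕ → Set X)
    -- the penalized functionals
    (Fn : ℕ → X → EReal)
    (hFn : ∀ (n : ℕ) (x : X), Fn n x =
      if x ∈ A n then ((E x + lam n * ‖γ x‖ ^ p - f x : ℝ) : EReal) else ⊤)
    -- the limit functional
    (F : X → EReal)
    (hF : ∀ x : X, F x = if γ x = 0 then ((E x - f x : ℝ) : EReal) else ⊤)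
    -- Assumption (A1)
    (hA1 : ∀ x : X, γ x = 0 → ∃ u : ℕ → X, (∀ n, u n ∈ A n) ∧
      Tendsto u atTop (𝓝 x) ∧
      Tendsto (fun n => lam n * ‖γ (u n)‖ ^ p) atTop (𝓝 0))
    -- Assumption (A3): equi-coercivity
    (hA3 : ∀ r : ℝ, ∃ C : ℝ, ∀ (n : ℕ) (x : X), Fn n x ≤ (r : EReal) → ‖x‖ ≤ C)
    -- xf is the unique global minimizer of F, and xf ∈ X₀
    (xf : X) (hxf0 : γ xf = 0) (hxfmin : ∀ z : X, F xf ≤ F z)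
    (hxfuniq : ∀ y : X, (∀ z : X, F y ≤ F z) → y = xf)
    -- quasi-minimizers
    (x : ℕ → X) (δ : ℕ → ℝ) (hδ0 : ∀ n, 0 ≤ δ n) (hδ : Tendsto δ atTop (𝓝 0))
    (hqm : ∀ n, Fn n (x n) ≤ (⨅ z : X, Fn n z) + (δ n : EReal)) :
    WeakTendsto x xf := by
  have hppos : (0:ℝ) < p := lt_trans one_pos hp
  obtain ⟨m₀, hm₀⟩ := hEbdd
  obtain ⟨u, huA, huconv, hupen⟩ := hA1 xf hxf0
  set M : ℝ := E xf - f xf with hMdef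
  set r : ℕ → ℝ := fun n => E (u n) + lam n * ‖γ (u n)‖ ^ p - f (u n) with hrdef
  have hr : Tendsto r atTop (𝓝 M) := by
    have h1 : Tendsto (fun n => E (u n)) atTop (𝓝 (E xf)) :=
      (hEcont.tendsto xf).comp huconv
    have h2 : Tendsto (fun n => f (u n)) atTop (𝓝 (f xf)) :=
      (f.continuous.tendsto xf).comp huconv
    have h3 := (h1.add hupen).sub h2
    simpa using h3
  -- every x n is admissible and satisfies the fundamental estimate
  have key : ∀ n, x n ∈ A n ∧
      E (x n) + lam n * ‖γ (x n)‖ ^ p - f (x n) ≤ r n + δ n := by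
    intro n
    have h3 : Fn n (u n) = ((r n : ℝ) : EReal) := by rw [hFn]; simp [huA n, hrdef]
    have h1 : Fn n (x n) ≤ ((r n + δ n : ℝ) : EReal) := by
      refine le_trans (hqm n) ?_
      calc (⨅ z : X, Fn n z) + (δ n : EReal) ≤ Fn n (u n) + (δ n : EReal) :=
            add_le_add_left (iInf_le _ _) _
        _ = ((r n + δ n : ℝ) : EReal) := by rw [h3, ← EReal.coe_add]
    rw [hFn] at h1
    by_cases hxA : x n ∈ A n
    · rw [if_pos hxA] at h1
      exact ⟨hxA, EReal.coe_le_coe_iff.mp h1⟩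
    · rw [if_neg hxA] at h1
      rw [top_le_iff] at h1
      exact absurd h1 (EReal.coe_ne_top _)
  have hrd : Tendsto (fun n => r n + δ n) atTop (𝓝 M) := by
    simpa using hr.add hδ
  obtain ⟨N₁, hN₁⟩ : ∃ N₁, ∀ n ≥ N₁, r n + δ n ≤ M + 1 := by
    have := hrd.eventually (eventually_le_nhds (by linarith : M < M + 1))
    exact eventually_atTop.mp this
  -- uniform norm bound from equi-coercivity
  obtain ⟨C₀, hC₀⟩ := hA3 (M + 1)
  have hFnle : ∀ n, Fn n (x n) ≤ ((r n + δ n : ℝ) : EReal) := by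
    intro n
    rw [hFn, if_pos (key n).1]
    exact EReal.coe_le_coe_iff.mpr (key n).2
  have hnorm : ∀ n ≥ N₁, ‖x n‖ ≤ C₀ := by
    intro n hn
    refine hC₀ n (x n) (le_trans (hFnle n) ?_)
    exact EReal.coe_le_coe_iff.mpr (hN₁ n hn)
  -- penalization term is bounded, so γ (x n) → 0
  have hpen : ∀ n ≥ N₁, lam n * ‖γ (x n)‖ ^ p ≤ M + 1 - m₀ + ‖f‖ * C₀ := by
    intro n hn
    have h1 := (key n).2
    have h2 : r n + δ n ≤ M + 1 := hN₁ n hn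
    have h3 : m₀ ≤ E (x n) := hm₀ _
    have h4 : f (x n) ≤ ‖f‖ * C₀ := by
      refine le_trans (le_abs_self _) ?_
      rw [← Real.norm_eq_abs]
      calc ‖f (x n)‖ ≤ ‖f‖ * ‖x n‖ := f.le_opNorm _
        _ ≤ ‖f‖ * C₀ := mul_le_mul_of_nonneg_left (hnorm n hn) (norm_nonneg f)
    linarith
  have hγp : Tendsto (fun n => ‖γ (x n)‖ ^ p) atTop (𝓝 0) := by
    apply squeeze_zero' (Eventually.of_forall fun n => Real.rpow_nonneg (norm_nonneg _) _)
      (g := fun n => (M + 1 - m₀ + ‖f‖ * C₀) / lam n)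
    · filter_upwards [eventually_ge_atTop N₁] with n hn
      rw [le_div_iff₀ (hlam_pos n), mul_comm]
      exact hpen n hn
    · exact tendsto_const_nhds.div_atTop hlam
  have hγ0 : Tendsto (fun n => ‖γ (x n)‖) atTop (𝓝 0) := by
    have hc : ContinuousAt (fun t : ℝ => t ^ p⁻¹) 0 :=
      Real.continuousAt_rpow_const 0 p⁻¹ (Or.inr (by positivity))
    have h1 := hc.tendsto.comp hγp
    rw [Real.zero_rpow (inv_ne_zero (ne_of_gt hppos))] at h1
    have h2 : (fun n => ((‖γ (x n)‖ ^ p) ^ p⁻¹)) = fun n => ‖γ (x n)‖ := by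
      funext n
      exact Real.rpow_rpow_inv (norm_nonneg _) (ne_of_gt hppos)
    rw [← h2]
    exact h1
  -- contradiction argument
  by_contra hcon
  obtain ⟨φ, hφ⟩ := not_forall.mp hcon
  rw [Metric.tendsto_atTop] at hφ
  push_neg at hφ
  obtain ⟨ε, hε, hfreq⟩ := hφ
  have hfr : ∃ᶠ n in atTop, ε ≤ dist (φ (x n)) (φ xf) := by
    rw [frequently_atTop]
    intro N
    obtain ⟨n, hn1, hn2⟩ := hfreq N
    exact ⟨n, hn1, hn2⟩
  obtain ⟨m, hm, hmspec⟩ := extraction_of_frequently_atTop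
    (hfr.and_eventually (eventually_ge_atTop N₁))
  obtain ⟨m', z, hm', hweak⟩ := exists_weak_subseq hXrefl (x ∘ m) C₀
    (fun k => hnorm (m k) (hmspec k).2)
  set ms : ℕ → ℕ := fun j => m (m' j) with hmsdef
  have hms : StrictMono ms := hm.comp hm'
  have hmsT : Tendsto ms atTop atTop := hms.tendsto_atTop
  have hweak' : ∀ φ' : X →L[ℝ] ℝ, Tendsto (fun j => φ' (x (ms j))) atTop (𝓝 (φ' z)) :=
    fun φ' => hweak φ'
  -- the weak limit is in the kernel of γ
  have hzγ : γ z = 0 := by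
    apply NormedSpace.eq_zero_of_forall_dual_eq_zero ℝ
    intro g
    have t1 : Tendsto (fun j => g (γ (x (ms j)))) atTop (𝓝 (g (γ z))) :=
      hweak' (g.comp γ)
    have t2 : Tendsto (fun j => g (γ (x (ms j)))) atTop (𝓝 0) := by
      have hb : Tendsto (fun j => ‖g‖ * ‖γ (x (ms j))‖) atTop (𝓝 0) := by
        have := (hγ0.comp hmsT).const_mul ‖g‖
        simpa [Function.comp] using this
      exact squeeze_zero_norm (fun j => g.le_opNorm _) hb
    exact tendsto_nhds_unique t1 t2
  -- the weak limit minimizes F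
  have hfz : Tendsto (fun j => f (x (ms j))) atTop (𝓝 (f z)) := hweak' f
  have hrdms : Tendsto (fun j => r (ms j) + δ (ms j)) atTop (𝓝 M) := hrd.comp hmsT
  have hEbound : ∀ j, E (x (ms j)) ≤ r (ms j) + δ (ms j) + f (x (ms j)) := by
    intro j
    have h1 := (key (ms j)).2
    have h2 : 0 ≤ lam (ms j) * ‖γ (x (ms j))‖ ^ p :=
      mul_nonneg (le_of_lt (hlam_pos _)) (Real.rpow_nonneg (norm_nonneg _) _)
    linarith
  have hElim := hElsc z ((x ∘ m) ∘ m') hweak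
  have h5 : liminf (fun j => ((E (((x ∘ m) ∘ m') j) : ℝ) : EReal)) atTop
      ≤ ((M + f z : ℝ) : EReal) := by
    have hlim : Tendsto (fun j => r (ms j) + δ (ms j) + f (x (ms j))) atTop
        (𝓝 (M + f z)) := hrdms.add hfz
    have h6 : Tendsto (fun j => (((r (ms j) + δ (ms j) + f (x (ms j))) : ℝ) : EReal))
        atTop (𝓝 ((M + f z : ℝ) : EReal)) := EReal.tendsto_coe.mpr hlim
    rw [← h6.liminf_eq]
    exact liminf_le_liminf (by
      filter_upwards with j
      exact EReal.coe_le_coe_iff.mpr (hEbound j))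
  have hEz : E z ≤ M + f z := EReal.coe_le_coe_iff.mp (le_trans hElim h5)
  have hFz : F z ≤ F xf := by
    rw [hF z, hF xf, if_pos hzγ, if_pos hxf0]
    exact EReal.coe_le_coe_iff.mpr (by rw [hMdef] at hEz; linarith)
  have hzxf : z = xf := hxfuniq z (fun w => le_trans hFz (hxfmin w))
  -- contradiction with the separation from φ xf
  have h7 : Tendsto (fun j => dist (φ (x (ms j))) (φ xf)) atTop
      (𝓝 (dist (φ z) (φ xf))) := (hweak' φ).dist tendsto_const_nhds
  have h8 : ε ≤ dist (φ z) (φ xf) :=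
    ge_of_tendsto h7 (Eventually.of_forall (fun j => (hmspec (m' j)).1))
  rw [hzxf, dist_self] at h8
  linarith
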